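/- Let n ≥ 2, let σ = (a_1, …, a_n) ∈ ℕ^n be a weight vector with c := a_n, let σ' = (a_1, …, a_{n−1}), and let d ∈ ℕ with d ≥ c. Let ev_0 : ℂ[x_1, …, x_n] → ℂ[x_1, …, x_{n−1}] be the ℂ-algebra homomorphism given by substituting x_n = 0. Then ev_0 maps the σ-weighted ideal I_{σ,d} surjectively onto the σ'-weighted ideal I_{σ',d} of ℂ[x_1, …, x_{n−1}], and the kernel of the restriction of ev_0 to I_{σ,d} is exactly x_n · I_{σ,d−c}. -/
import Mathlib
open MvPolynomial

/-- For a weight vector `σ = (a_1, …, a_n) ∈ ℕ^n` and `d ∈ ℕ`, the `σ`-weighted ideal of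
degree `d` is the ideal of `ℂ[x_1, …, x_n]` generated by all monomials
`x_1^{s_1} ⋯ x_n^{s_n}` with `Σ_j s_j a_j ≥ d`. -/
noncomputable def weightedIdeal (n : ℕ) (σ : Fin n → ℕ) (d : ℕ) : Ideal (MvPolynomial (Fin n) ℂ) :=
  Ideal.span {p | ∃ s : Fin n →₀ ℕ, d ≤ ∑ j, s j * σ j ∧ p = monomial s (1 : ℂ)}

lemma mem_weightedIdeal_iff {k : ℕ} {w : Fin k → ℕ} {d : ℕ} {p : MvPolynomial (Fin k) ℂ} :
    p ∈ weightedIdeal k w d ↔ ∀ s ∈ p.support, d ≤ ∑ j, s j * w j := by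
  constructor
  · intro hp
    refine Submodule.span_induction ?_ ?_ ?_ ?_ hp
    · rintro x ⟨s, hs, rfl⟩ t ht
      rw [support_monomial, if_neg one_ne_zero] at ht
      simp only [Finset.mem_singleton] at ht
      subst ht; exact hs
    · simp
    · intro x y _ _ hx hy t ht
      rcases Finset.mem_union.mp (MvPolynomial.support_add ht) with h | h
      exacts [hx t h, hy t h]
    · intro a x _ hx t ht
      have := MvPolynomial.support_mul a x (by simpa using ht)
      rcases Finset.mem_add.mp this with ⟨u, hu, v, hv, rfl⟩
      calc d ≤ ∑ j, v j * w j := hx v hv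
        _ ≤ ∑ j, (u + v) j * w j := by
            apply Finset.sum_le_sum; intro j _
            simp only [Finsupp.add_apply]
            exact Nat.mul_le_mul_right _ (Nat.le_add_left _ _)
  · intro h
    rw [p.as_sum]
    refine Ideal.sum_mem _ fun s hs => ?_
    have : (monomial s) (coeff s p) = C (coeff s p) * monomial s 1 := by
      simp [MvPolynomial.C_mul_monomial]
    rw [this]
    exact Ideal.mul_mem_left _ _ (Ideal.subset_span ⟨s, h s hs, rfl⟩)

namespace Stmt4Aux

noncomputable def restr {m : ℕ} (s : Fin (m + 1) →₀ ℕ) : Fin m →₀ ℕ :=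
  Finsupp.equivFunOnFinite.symm fun j => s (Fin.castSucc j)

lemma restr_apply {m : ℕ} (s : Fin (m + 1) →₀ ℕ) (j : Fin m) :
    restr s j = s (Fin.castSucc j) := rfl

lemma mapDomain_last {m : ℕ} (t : Fin m →₀ ℕ) :
    Finsupp.mapDomain Fin.castSucc t (Fin.last m) = 0 :=
  Finsupp.mapDomain_notin_range t _ (by rintro ⟨j, hj⟩; exact (Fin.castSucc_lt_last j).ne hj)

lemma restr_mapDomain {m : ℕ} (t : Fin m →₀ ℕ) :
    restr (Finsupp.mapDomain Fin.castSucc t) = t := by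
  ext j
  rw [restr_apply, Finsupp.mapDomain_apply (Fin.castSucc_injective m)]

lemma mapDomain_restr {m : ℕ} (s : Fin (m + 1) →₀ ℕ) (hs : s (Fin.last m) = 0) :
    Finsupp.mapDomain Fin.castSucc (restr s) = s := by
  ext i
  induction i using Fin.lastCases with
  | last => rw [mapDomain_last, hs]
  | cast j => rw [Finsupp.mapDomain_apply (Fin.castSucc_injective m), restr_apply]

lemma weight_mapDomain {m : ℕ} (σ : Fin (m + 1) → ℕ) (t : Fin m →₀ ℕ) :
    ∑ i, (Finsupp.mapDomain Fin.castSucc t) i * σ i = ∑ j, t j * σ (Fin.castSucc j) := by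
  rw [Fin.sum_univ_castSucc]
  simp only [mapDomain_last, zero_mul, add_zero]
  refine Finset.sum_congr rfl fun j _ => ?_
  rw [Finsupp.mapDomain_apply (Fin.castSucc_injective m)]

lemma weight_add_single_last {m : ℕ} (σ : Fin (m + 1) → ℕ) (u : Fin (m + 1) →₀ ℕ) :
    ∑ i, ((u + Finsupp.single (Fin.last m) 1 : Fin (m+1) →₀ ℕ)) i * σ i = (∑ i, u i * σ i) + σ (Fin.last m) := by
  simp only [Finsupp.add_apply, add_mul, Finset.sum_add_distrib]
  congr 1
  rw [Finset.sum_eq_single (Fin.last m)]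
  · simp
  · intro b _ hb; simp [Finsupp.single_apply, Ne.symm hb]
  · simp

end Stmt4Aux

namespace Stmt4Aux

noncomputable def ev (m : ℕ) : MvPolynomial (Fin (m + 1)) ℂ →ₐ[ℂ] MvPolynomial (Fin m) ℂ :=
  aeval (fun i : Fin (m + 1) => if h : (i : ℕ) < m then X (⟨(i : ℕ), h⟩ : Fin m) else 0)

lemma ev_rename {m : ℕ} (p : MvPolynomial (Fin m) ℂ) : ev m (rename Fin.castSucc p) = p := by
  rw [ev, aeval_rename]
  have hfun : ((fun i : Fin (m + 1) => if h : (i : ℕ) < m then X (⟨(i : ℕ), h⟩ : Fin m) else 0)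
      ∘ Fin.castSucc) = (X : Fin m → MvPolynomial (Fin m) ℂ) := by
    funext j
    simp only [Function.comp_apply, Fin.coe_castSucc]
    rw [dif_pos j.isLt]
  rw [hfun, aeval_X_left_apply]

lemma ev_monomial {m : ℕ} (s : Fin (m + 1) →₀ ℕ) (a : ℂ) :
    ev m (monomial s a) = if s (Fin.last m) = 0 then monomial (restr s) a else 0 := by
  split_ifs with h
  · conv_lhs => rw [← mapDomain_restr s h, ← rename_monomial]
    rw [ev_rename]
  · rw [ev, aeval_monomial]
    apply mul_eq_zero_of_right
    apply Finset.prod_eq_zero (Finsupp.mem_support_iff.mpr h)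
    simp [zero_pow h]

lemma ev_X_last {m : ℕ} : ev m (X (Fin.last m)) = 0 := by
  rw [ev, aeval_X]
  exact dif_neg (by simp)

lemma ev_coeff {m : ℕ} (g : MvPolynomial (Fin (m + 1)) ℂ) (t : Fin m →₀ ℕ) :
    coeff t (ev m g) = coeff (Finsupp.mapDomain Fin.castSucc t) g := by
  conv_lhs => rw [g.as_sum]
  rw [map_sum, coeff_sum]
  have key : ∀ s ∈ g.support, coeff t (ev m (monomial s (coeff s g))) =
      if s = Finsupp.mapDomain Fin.castSucc t then coeff s g else 0 := by
    intro s _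
    rw [ev_monomial]
    split_ifs with h1 h2 h3
    · subst h2; rw [coeff_monomial, if_pos (restr_mapDomain t)]
    · rw [coeff_monomial, if_neg]
      intro he; exact h2 (by rw [← mapDomain_restr s h1, he])
    · exact absurd (by rw [h3, mapDomain_last]) h1
    · simp
  rw [Finset.sum_congr rfl key, Finset.sum_ite_eq']
  split_ifs with h
  · rfl
  · exact (notMem_support_iff.mp h).symm

end Stmt4Aux

open Stmt4Aux

/-- Let `n ≥ 2`, `c := a_n`, `σ' = (a_1, …, a_{n−1})` and `d ≥ c`. The substitution
`x_n = 0` map `ev₀ : ℂ[x_1, …, x_n] → ℂ[x_1, …, x_{n−1}]` sends `I_{σ,d}` surjectively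
onto `I_{σ',d}`, and the kernel of its restriction to `I_{σ,d}` is exactly
`x_n · I_{σ,d−c}`. -/
theorem stmt_4 (n : ℕ) (hn : 2 ≤ n) (σ : Fin n → ℕ) (d : ℕ)
    (c : ℕ) (hc : c = σ ⟨n - 1, by omega⟩) (hd : c ≤ d)
    (σ' : Fin (n - 1) → ℕ) (hσ' : ∀ j : Fin (n - 1), σ' j = σ (Fin.castLE (by omega) j))
    (ev₀ : MvPolynomial (Fin n) ℂ →ₐ[ℂ] MvPolynomial (Fin (n - 1)) ℂ)
    (hev : ev₀ = aeval (fun i : Fin n =>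
        if h : (i : ℕ) < n - 1 then X (⟨(i : ℕ), h⟩ : Fin (n - 1)) else 0)) :
    (∀ g ∈ weightedIdeal n σ d, ev₀ g ∈ weightedIdeal (n - 1) σ' d) ∧
    (∀ h ∈ weightedIdeal (n - 1) σ' d, ∃ g ∈ weightedIdeal n σ d, ev₀ g = h) ∧
    (∀ g ∈ weightedIdeal n σ d,
      (ev₀ g = 0 ↔ ∃ p ∈ weightedIdeal n σ (d - c),
        g = X (⟨n - 1, by omega⟩ : Fin n) * p)) := by
  obtain ⟨m, rfl⟩ : ∃ m, n = m + 1 := ⟨n - 1, by omega⟩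
  have hev2 : ev₀ = ev m := hev
  subst hev2
  have hc2 : c = σ (Fin.last m) := hc
  have hσ2 : ∀ j : Fin m, σ' j = σ (Fin.castSucc j) := fun j => by
    rw [hσ' j]; congr 1
  show (∀ g ∈ weightedIdeal (m + 1) σ d, ev m g ∈ weightedIdeal m σ' d) ∧
    (∀ h ∈ weightedIdeal m σ' d, ∃ g ∈ weightedIdeal (m + 1) σ d, ev m g = h) ∧
    (∀ g ∈ weightedIdeal (m + 1) σ d,
      (ev m g = 0 ↔ ∃ p ∈ weightedIdeal (m + 1) σ (d - c), g = X (Fin.last m) * p))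
  refine ⟨?_, ?_, ?_⟩
  · -- Part 1
    intro g hg
    rw [mem_weightedIdeal_iff] at hg ⊢
    intro t ht
    rw [MvPolynomial.mem_support_iff, ev_coeff] at ht
    have h2 := hg _ (MvPolynomial.mem_support_iff.mpr ht)
    rw [weight_mapDomain] at h2
    calc d ≤ ∑ j, t j * σ (Fin.castSucc j) := h2
      _ = ∑ j, t j * σ' j := Finset.sum_congr rfl fun j _ => by rw [hσ2 j]
  · -- Part 2
    intro h hh
    refine ⟨rename Fin.castSucc h, ?_, ev_rename h⟩
    rw [mem_weightedIdeal_iff] at hh ⊢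
    intro s hs
    rw [support_rename_of_injective (Fin.castSucc_injective m), Finset.mem_image] at hs
    obtain ⟨t, ht, rfl⟩ := hs
    rw [weight_mapDomain]
    calc d ≤ ∑ j, t j * σ' j := hh t ht
      _ = ∑ j, t j * σ (Fin.castSucc j) :=
          Finset.sum_congr rfl fun j _ => by rw [hσ2 j]
  · -- Part 3
    intro g hg
    constructor
    · intro h0
      have hsupp : ∀ s ∈ g.support, s (Fin.last m) ≠ 0 := by
        intro s hs h1
        have h2 : coeff s g = coeff (restr s) (ev m g) := by
          rw [ev_coeff, mapDomain_restr s h1]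
        rw [h0, coeff_zero] at h2
        exact MvPolynomial.mem_support_iff.mp hs h2
      set p : MvPolynomial (Fin (m + 1)) ℂ :=
        ∑ s ∈ g.support, monomial (s - Finsupp.single (Fin.last m) 1) (coeff s g) with hp
      have hgp : g = X (Fin.last m) * p := by
        rw [hp, Finset.mul_sum]
        conv_lhs => rw [g.as_sum]
        refine Finset.sum_congr rfl fun s hs => ?_
        have hle : Finsupp.single (Fin.last m) 1 ≤ s :=
          Finsupp.single_le_iff.mpr (Nat.one_le_iff_ne_zero.mpr (hsupp s hs))
        rw [show (X (Fin.last m) : MvPolynomial (Fin (m + 1)) ℂ)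
            = monomial (Finsupp.single (Fin.last m) 1) 1 from rfl,
          monomial_mul, one_mul, add_tsub_cancel_of_le hle]
      refine ⟨p, ?_, hgp⟩
      rw [mem_weightedIdeal_iff]
      intro u hu
      have hcu : coeff (Finsupp.single (Fin.last m) 1 + u) g ≠ 0 := by
        rw [hgp, coeff_X_mul]
        exact MvPolynomial.mem_support_iff.mp hu
      have hw := (mem_weightedIdeal_iff.mp hg) _ (MvPolynomial.mem_support_iff.mpr hcu)
      rw [show (Finsupp.single (Fin.last m) 1 + u) = u + Finsupp.single (Fin.last m) 1
          from add_comm _ _, weight_add_single_last, ← hc2] at hw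
      omega
    · rintro ⟨p, _, rfl⟩
      rw [map_mul, ev_X_last, zero_mul]
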